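/- Fix τ ∈ (0,1), let K : ℝ → [0,∞) be a measurable kernel with ∫K(w)dw = 1 and ∫|w|K(w)dw < ∞, let h > 0, and let ρ_{τ,h}(u) = ∫ρ_τ(v)K_h(v−u)dv with K_h(u) = h⁻¹K(u/h). Then ρ_{τ,h} is differentiable on ℝ with derivative ρ_{τ,h}′(u) = τ − K̄(−u/h), where K̄(u) = ∫_{−∞}^u K(v)dv. -/

import Mathlib

open MeasureTheory

/-- The quantile (check) loss `ρ_τ(t) = t(τ − 1_{t<0})`. -/
noncomputable def quantileLoss (τ t : ℝ) : ℝ := t * (τ - if t < 0 then 1 else 0)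

/-- The convolution-smoothed quantile loss
`ρ_{τ,h}(u) = ∫ ρ_τ(v) K_h(v − u) dv` with `K_h(u) = h⁻¹ K(u/h)`. -/
noncomputable def smoothedQuantileLoss (τ h : ℝ) (K : ℝ → ℝ) (u : ℝ) : ℝ :=
  ∫ v, quantileLoss τ v * (K ((v - u) / h) / h)

/-- The integrated kernel `K̄(u) = ∫_{−∞}^u K(v) dv`. -/
noncomputable def integratedKernel (K : ℝ → ℝ) (u : ℝ) : ℝ :=
  ∫ v in Set.Iic u, K v

lemma quantileLoss_eq (τ t : ℝ) : quantileLoss τ t = τ * t - min t 0 := by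
  unfold quantileLoss
  rcases lt_or_ge t 0 with h | h
  · rw [if_pos h, min_eq_left h.le]; ring
  · rw [if_neg (not_lt.2 h), min_eq_right h]; ring

lemma quantileLoss_continuous (τ : ℝ) : Continuous (quantileLoss τ) := by
  have : quantileLoss τ = fun t => τ * t - min t 0 := funext (quantileLoss_eq τ)
  rw [this]; fun_prop

lemma quantileLoss_abs_le (τ t : ℝ) (h0 : 0 < τ) (h1 : τ < 1) :
    |quantileLoss τ t| ≤ |t| := by
  unfold quantileLoss
  rw [abs_mul]
  have : |τ - if t < 0 then 1 else 0| ≤ 1 := by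
    split <;> rw [abs_le] <;> constructor <;> linarith
  calc |t| * |τ - if t < 0 then 1 else 0| ≤ |t| * 1 :=
        mul_le_mul_of_nonneg_left this (abs_nonneg t)
    _ = |t| := mul_one _

lemma quantileLoss_lip (τ : ℝ) (h0 : 0 < τ) (h1 : τ < 1) (s t : ℝ) :
    |quantileLoss τ s - quantileLoss τ t| ≤ 2 * |s - t| := by
  rw [quantileLoss_eq, quantileLoss_eq]
  have hmin : |min s 0 - min t 0| ≤ |s - t| := by
    have := abs_min_sub_min_le_max s 0 t 0
    simpa using this
  calc |τ * s - min s 0 - (τ * t - min t 0)|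
      = |τ * (s - t) - (min s 0 - min t 0)| := by ring_nf
    _ ≤ |τ * (s - t)| + |min s 0 - min t 0| := abs_sub _ _
    _ ≤ τ * |s - t| + |s - t| := by
        rw [abs_mul, abs_of_pos h0]
        exact add_le_add le_rfl hmin
    _ ≤ 2 * |s - t| := by nlinarith [abs_nonneg (s - t)]

lemma quantileLoss_hasDerivAt (τ : ℝ) {t : ℝ} (ht : t ≠ 0) :
    HasDerivAt (quantileLoss τ) (τ - if t < 0 then 1 else 0) t := by
  rcases ht.lt_or_gt with h | h
  · have hd : HasDerivAt (fun s => s * (τ - 1)) (τ - 1) t := by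
      simpa using (hasDerivAt_id t).mul_const (τ - 1)
    have heq : quantileLoss τ =ᶠ[nhds t] fun s => s * (τ - 1) := by
      filter_upwards [Iio_mem_nhds h] with s hs
      have hs' : s < 0 := hs
      simp [quantileLoss, hs']
    simpa [if_pos h] using hd.congr_of_eventuallyEq heq
  · have hd : HasDerivAt (fun s => s * τ) τ t := by
      simpa using (hasDerivAt_id t).mul_const τ
    have heq : quantileLoss τ =ᶠ[nhds t] fun s => s * τ := by
      filter_upwards [Ioi_mem_nhds h] with s hs
      simp [quantileLoss, not_lt.2 (le_of_lt (show (0:ℝ) < s from hs))]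
    simpa [if_neg (not_lt.2 h.le)] using hd.congr_of_eventuallyEq heq

theorem smoothedQuantileLoss_hasDerivAt
    (τ h : ℝ) (hτ0 : 0 < τ) (hτ1 : τ < 1) (hh : 0 < h)
    (K : ℝ → ℝ) (hK_meas : Measurable K) (hK_nonneg : ∀ w, 0 ≤ K w)
    (hK_int : Integrable K) (hK_one : ∫ w, K w = 1)
    (hK_abs : Integrable (fun w => |w| * K w)) :
    ∀ u : ℝ,
      HasDerivAt (smoothedQuantileLoss τ h K) (τ - integratedKernel K (-u / h)) u := by
  intro u
  -- Step 1: change of variables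
  have hchg : smoothedQuantileLoss τ h K = fun x => ∫ w, quantileLoss τ (x + h * w) * K w := by
    funext x
    unfold smoothedQuantileLoss
    set f : ℝ → ℝ := fun v => quantileLoss τ (x + v) * (K (v / h) / h) with hf
    have e1 : (∫ v, f v) = ∫ v, quantileLoss τ v * (K ((v - x) / h) / h) := by
      rw [← integral_add_left_eq_self (fun v => quantileLoss τ v * (K ((v - x) / h) / h)) x]
      congr 1; funext v; simp [hf]
    have e2 : (∫ w, f (h * w)) = |h⁻¹| • ∫ v, f v :=
      MeasureTheory.Measure.integral_comp_mul_left f h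
    have e3 : (∫ w, quantileLoss τ (x + h * w) * K w) = h * ∫ w, f (h * w) := by
      rw [← MeasureTheory.integral_const_mul]
      congr 1; funext w
      simp only [hf, mul_div_cancel_left₀ _ hh.ne']
      field_simp
    rw [← e1, e3, e2, smul_eq_mul, abs_of_pos (inv_pos.2 hh)]
    field_simp
  rw [hchg]
  -- Step 2: differentiate under the integral
  set F' : ℝ → ℝ := fun w => (τ - if u + h * w < 0 then 1 else 0) * K w with hF'
  have hmeasF : ∀ x : ℝ, AEStronglyMeasurable (fun w => quantileLoss τ (x + h * w) * K w) volume := by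
    intro x
    exact (((quantileLoss_continuous τ).measurable.comp
      ((measurable_const_mul h).const_add x)).mul hK_meas).aestronglyMeasurable
  have hIntF : ∀ x : ℝ, Integrable (fun w => quantileLoss τ (x + h * w) * K w) := by
    intro x
    refine Integrable.mono' ((hK_int.const_mul |x|).add (hK_abs.const_mul h)) (hmeasF x) ?_
    filter_upwards with w
    simp only [Pi.add_apply, Real.norm_eq_abs]
    rw [abs_mul, abs_of_nonneg (hK_nonneg w)]
    have h1 : |quantileLoss τ (x + h * w)| ≤ |x| + h * |w| := by
      calc |quantileLoss τ (x + h * w)| ≤ |x + h * w| := quantileLoss_abs_le τ _ hτ0 hτ1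
        _ ≤ |x| + |h * w| := abs_add_le _ _
        _ = |x| + h * |w| := by rw [abs_mul, abs_of_pos hh]
    calc |quantileLoss τ (x + h * w)| * K w ≤ (|x| + h * |w|) * K w :=
          mul_le_mul_of_nonneg_right h1 (hK_nonneg w)
      _ = |x| * K w + h * (|w| * K w) := by ring
  have hF'meas : AEStronglyMeasurable F' volume := by
    have hs : MeasurableSet {w : ℝ | u + h * w < 0} :=
      measurableSet_lt (by fun_prop) measurable_const
    exact ((measurable_const.sub
      (Measurable.ite hs measurable_const measurable_const)).mul hK_meas).aestronglyMeasurable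
  have hlip : ∀ᵐ w : ℝ, LipschitzOnWith (Real.nnabs (2 * K w))
      (fun x => quantileLoss τ (x + h * w) * K w) (Metric.ball u 1) := by
    filter_upwards with w
    apply LipschitzWith.lipschitzOnWith
    apply LipschitzWith.of_dist_le_mul
    intro x y
    rw [Real.dist_eq, Real.dist_eq]
    have : ((Real.nnabs (2 * K w)) : ℝ) = 2 * K w := by
      rw [Real.coe_nnabs, abs_of_nonneg (by linarith [hK_nonneg w] : (0:ℝ) ≤ 2 * K w)]
    rw [this]
    calc |quantileLoss τ (x + h * w) * K w - quantileLoss τ (y + h * w) * K w|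
        = |quantileLoss τ (x + h * w) - quantileLoss τ (y + h * w)| * K w := by
          rw [← sub_mul, abs_mul, abs_of_nonneg (hK_nonneg w)]
      _ ≤ 2 * |x + h * w - (y + h * w)| * K w := by
          exact mul_le_mul_of_nonneg_right (quantileLoss_lip τ hτ0 hτ1 _ _) (hK_nonneg w)
      _ = 2 * K w * |x - y| := by ring_nf
  have hdiff : ∀ᵐ w : ℝ, HasDerivAt (fun x => quantileLoss τ (x + h * w) * K w) (F' w) u := by
    have hnull : ∀ᵐ w : ℝ, u + h * w ≠ 0 := by
      rw [ae_iff]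
      have hsub : {w : ℝ | ¬ u + h * w ≠ 0} ⊆ {-u / h} := by
        intro w hw
        simp only [Set.mem_setOf_eq, not_not] at hw
        have hw' : w = -u / h := by field_simp; linarith
        simp [hw']
      exact measure_mono_null hsub (measure_singleton _)
    filter_upwards [hnull] with w hw
    have h1 : HasDerivAt (fun x : ℝ => x + h * w) 1 u := (hasDerivAt_id u).add_const _
    have h2 : HasDerivAt (quantileLoss τ) (τ - if u + h * w < 0 then 1 else 0) (u + h * w) :=
      quantileLoss_hasDerivAt τ hw
    have h3 := (h2.comp u h1).mul_const (K w)
    simpa [hF'] using h3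
  have key := hasDerivAt_integral_of_dominated_loc_of_lip (F := fun x w =>
      quantileLoss τ (x + h * w) * K w) (F' := F') (bound := fun w => 2 * K w)
      (Metric.ball_mem_nhds u one_pos) (Filter.Eventually.of_forall hmeasF) (hIntF u) hF'meas hlip
      (hK_int.const_mul 2) hdiff
  -- Step 3: compute the integral of F'
  have hindInt : Integrable (fun w => (if u + h * w < 0 then (1:ℝ) else 0) * K w) := by
    refine Integrable.mono' hK_int ?_ ?_
    · have hs : MeasurableSet {w : ℝ | u + h * w < 0} :=
        measurableSet_lt (by fun_prop) measurable_const
      exact ((Measurable.ite hs measurable_const measurable_const).mul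
        hK_meas).aestronglyMeasurable
    · filter_upwards with w
      simp only [Real.norm_eq_abs]
      rw [abs_mul, abs_of_nonneg (hK_nonneg w)]
      split <;> simp [hK_nonneg w]
  have hval : (∫ w, F' w) = τ - integratedKernel K (-u / h) := by
    have e1 : (∫ w, F' w) = (∫ w, τ * K w) - ∫ w, (if u + h * w < 0 then (1:ℝ) else 0) * K w := by
      rw [← integral_sub (hK_int.const_mul τ) hindInt]
      congr 1; funext w; simp only [hF']; ring
    have e2 : (∫ w, τ * K w) = τ := by rw [MeasureTheory.integral_const_mul, hK_one, mul_one]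
    have e3 : (∫ w, (if u + h * w < 0 then (1:ℝ) else 0) * K w)
        = ∫ w in Set.Iio (-u / h), K w := by
      rw [← integral_indicator measurableSet_Iio]
      congr 1; funext w
      have : u + h * w < 0 ↔ w ∈ Set.Iio (-u / h) := by
        rw [Set.mem_Iio, lt_div_iff₀ hh]
        constructor <;> intro <;> linarith
      by_cases hw : w ∈ Set.Iio (-u / h)
      · rw [Set.indicator_of_mem hw, if_pos (this.2 hw), one_mul]
      · rw [Set.indicator_of_notMem hw, if_neg (fun hc => hw (this.1 hc)), zero_mul]
    have e4 : (∫ w in Set.Iio (-u / h), K w) = integratedKernel K (-u / h) :=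
      setIntegral_congr_set Iio_ae_eq_Iic
    rw [e1, e2, e3, e4]
  rw [← hval]
  exact key.2
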